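/- Let T > 0, I = (0,T) with one-dimensional Lebesgue measure, (Ω, μ) a finite measure space, and U := L²(I × Ω) with respect to the product measure. Let W be a real Hilbert space and ι : W → L²(Ω, μ) a compact bounded linear operator. Fix α, β, γ > 0 and p ∈ (0,1). Assume f : U → ℝ is sequentially weakly lower semicontinuous and bounded below by a continuous affine functional (i.e., there exist a continuous linear functional g on U and c ∈ ℝ with f(u) ≥ g(u) + c for all u ∈ U). Then the problem of minimizing Φ(u,w) := f(u) + (α/2)‖u‖²_U + (β/2)‖w‖²_W + γ ∫_Ω |(ι w)(x)|^p dμ(x) over the admissible set K := {(u, w) ∈ U × W : |u(t,x)| ≤ (ι w)(x) for a.e. (t,x) ∈ I × Ω} admits a global solution, i.e., there exists (ū, w̄) ∈ K with Φ(ū, w̄) ≤ Φ(u, w) for all (u, w) ∈ K. -/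

import Mathlib

open MeasureTheory Filter

/-- The product measure on the time-space cylinder `I × Ω` with `I = (0,T)` carrying
one-dimensional Lebesgue measure. -/
noncomputable def timeSpaceMeasure {Ω : Type*} [MeasurableSpace Ω] (μ : Measure Ω)
    (T : ℝ) : Measure (ℝ × Ω) :=
  (volume.restrict (Set.Ioo (0 : ℝ) T)).prod μ

open scoped ENNReal

section Aux

open scoped RealInnerProductSpace

/-- Bounded sequences in a real Hilbert space admit weakly convergent subsequences. -/
theorem exists_weak_subseq_limit {H : Type*} [NormedAddCommGroup H] [InnerProductSpace ℝ H]
    [CompleteSpace H] (v : ℕ → H) (R : ℝ) (hv : ∀ k, ‖v k‖ ≤ R) :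
    ∃ (φ : ℕ → ℕ) (v₀ : H), StrictMono φ ∧
      ∀ z : H, Tendsto (fun k => (⟪v (φ k), z⟫ : ℝ)) atTop (nhds ⟪v₀, z⟫) := by
  have hR : 0 ≤ R := le_trans (norm_nonneg _) (hv 0)
  have hmem : ∀ k, (fun n => (⟪v k, v n⟫ : ℝ)) ∈ Set.pi Set.univ
      (fun _ : ℕ => Set.Icc (-(R*R)) (R*R)) := by
    intro k n _
    have h1 : |(⟪v k, v n⟫ : ℝ)| ≤ ‖v k‖ * ‖v n‖ := abs_real_inner_le_norm _ _
    have h2 : ‖v k‖ * ‖v n‖ ≤ R * R :=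
      mul_le_mul (hv k) (hv n) (norm_nonneg _) hR
    constructor <;> [linarith [neg_abs_le (⟪v k, v n⟫ : ℝ)]; linarith [le_abs_self (⟪v k, v n⟫ : ℝ)]]
  obtain ⟨L, -, φ, hφ, hconv⟩ :=
    (isCompact_univ_pi (fun _ : ℕ => isCompact_Icc)).isSeqCompact hmem
  have hpt : ∀ n, Tendsto (fun k => (⟪v (φ k), v n⟫ : ℝ)) atTop (nhds (L n)) := by
    intro n
    exact (tendsto_pi_nhds.1 hconv) n
  set G : Set H := {z | ∃ a : ℝ, Tendsto (fun k => (⟪v (φ k), z⟫ : ℝ)) atTop (nhds a)} with hG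
  have hbnd : ∀ z k, |(⟪v (φ k), z⟫ : ℝ)| ≤ R * ‖z‖ := fun z k =>
    le_trans (abs_real_inner_le_norm _ _) (mul_le_mul_of_nonneg_right (hv _) (norm_nonneg _))
  have hGadd : ∀ x y, x ∈ G → y ∈ G → x + y ∈ G := by
    rintro x y ⟨a, ha⟩ ⟨b, hb⟩
    exact ⟨a + b, by simpa [inner_add_right] using ha.add hb⟩
  have hGsmul : ∀ (c : ℝ) x, x ∈ G → c • x ∈ G := by
    rintro c x ⟨a, ha⟩
    exact ⟨c * a, by simpa [inner_smul_right] using ha.const_mul c⟩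
  have hGclosed : ∀ z, z ∈ closure G → z ∈ G := by
    intro z hz
    have hC : CauchySeq (fun k => (⟪v (φ k), z⟫ : ℝ)) := by
      rw [Metric.cauchySeq_iff]
      intro ε hε
      obtain ⟨y, hyG, hy⟩ : ∃ y ∈ G, ‖z - y‖ < ε / (4 * (R + 1)) := by
        have := Metric.mem_closure_iff.1 hz (ε / (4 * (R + 1))) (by positivity)
        obtain ⟨y, hyG, hy⟩ := this
        exact ⟨y, hyG, by simpa [dist_eq_norm] using hy⟩
      obtain ⟨a, ha⟩ := hyG
      have hca : CauchySeq (fun k => (⟪v (φ k), y⟫ : ℝ)) := ha.cauchySeq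
      rw [Metric.cauchySeq_iff] at hca
      obtain ⟨N, hN⟩ := hca (ε / 2) (by positivity)
      refine ⟨N, fun m hm n hn => ?_⟩
      have key : ∀ j, |(⟪v (φ j), z⟫ : ℝ) - ⟪v (φ j), y⟫| ≤ R * (ε / (4 * (R + 1))) := by
        intro j
        have : (⟪v (φ j), z⟫ : ℝ) - ⟪v (φ j), y⟫ = ⟪v (φ j), z - y⟫ := by
          rw [inner_sub_right]
        rw [this]
        refine le_trans (hbnd _ _) ?_
        exact mul_le_mul_of_nonneg_left hy.le hR
      have hRe : R * (ε / (4 * (R + 1))) ≤ ε / 4 := by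
        have heq : R * (ε / (4 * (R + 1))) = (R / (R + 1)) * (ε / 4) := by
          field_simp
        have h1 : R / (R + 1) ≤ 1 := by
          rw [div_le_one (by linarith)]; linarith
        rw [heq]
        calc (R / (R+1)) * (ε / 4) ≤ 1 * (ε / 4) :=
              mul_le_mul_of_nonneg_right h1 (by positivity)
          _ = ε / 4 := one_mul _
      have h1 := hN m hm n hn
      rw [Real.dist_eq] at h1 ⊢
      have d1 := key m; have d2 := key n
      have t1 : |(⟪v (φ m), z⟫:ℝ) - ⟪v (φ n), z⟫| ≤
          |(⟪v (φ m), z⟫:ℝ) - ⟪v (φ m), y⟫| + |(⟪v (φ m), y⟫:ℝ) - ⟪v (φ n), z⟫| :=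
        abs_sub_le _ _ _
      have t2 : |(⟪v (φ m), y⟫:ℝ) - ⟪v (φ n), z⟫| ≤
          |(⟪v (φ m), y⟫:ℝ) - ⟪v (φ n), y⟫| + |(⟪v (φ n), y⟫:ℝ) - ⟪v (φ n), z⟫| :=
        abs_sub_le _ _ _
      have d2' : |(⟪v (φ n), y⟫:ℝ) - ⟪v (φ n), z⟫| ≤ R * (ε / (4 * (R + 1))) := by
        rw [abs_sub_comm]; exact d2
      linarith
    obtain ⟨a, ha⟩ := cauchySeq_tendsto_of_complete hC
    exact ⟨a, ha⟩
  set S : Submodule ℝ H := (Submodule.span ℝ (Set.range v)).topologicalClosure with hS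
  haveI : CompleteSpace S := (Submodule.isClosed_topologicalClosure _).completeSpace_coe
  have hSpan : ∀ z ∈ Submodule.span ℝ (Set.range v), z ∈ G := by
    intro z hzs
    refine Submodule.span_induction ?_ ?_ ?_ ?_ hzs
    · rintro x ⟨n, rfl⟩; exact ⟨L n, hpt n⟩
    · exact ⟨0, by simpa [inner_zero_right] using tendsto_const_nhds⟩
    · intro x y _ _ hx hy; exact hGadd x y hx hy
    · intro c x _ hx; exact hGsmul c x hx
  have hSG : ∀ z ∈ S, z ∈ G := by
    intro z hzS
    have : z ∈ closure (Submodule.span ℝ (Set.range v) : Set H) := by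
      rw [hS] at hzS
      exact hzS
    refine hGclosed z (closure_mono ?_ this)
    intro x hx; exact hSpan x hx
  have hAll : ∀ z : H, z ∈ G := by
    intro z
    have h1 : (S.orthogonalProjectionOnto z : H) ∈ G := hSG _ (S.orthogonalProjectionOnto z).2
    have h2 : z - (S.orthogonalProjectionOnto z : H) ∈ G := by
      refine ⟨0, ?_⟩
      have : ∀ k, (⟪v (φ k), z - (S.orthogonalProjectionOnto z : H)⟫ : ℝ) = 0 := by
        intro k
        refine Submodule.inner_right_of_mem_orthogonal ?_
          (Submodule.sub_starProjection_mem_orthogonal (K := S) z)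
        exact Submodule.le_topologicalClosure _ (Submodule.subset_span ⟨φ k, rfl⟩)
      simp only [this]; exact tendsto_const_nhds
    have := hGadd _ _ h1 h2
    simpa using this
  choose l hl using hAll
  have hladd : ∀ x y, l (x + y) = l x + l y := by
    intro x y
    refine tendsto_nhds_unique (hl (x + y)) ?_
    simpa [inner_add_right] using (hl x).add (hl y)
  have hlsmul : ∀ (c : ℝ) x, l (c • x) = c * l x := by
    intro c x
    refine tendsto_nhds_unique (hl (c • x)) ?_
    simpa [inner_smul_right] using (hl x).const_mul c
  have hlbound : ∀ z, |l z| ≤ R * ‖z‖ := by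
    intro z
    have : Tendsto (fun k => |(⟪v (φ k), z⟫ : ℝ)|) atTop (nhds |l z|) := (hl z).abs
    exact le_of_tendsto this (Eventually.of_forall fun k => hbnd z k)
  let lmap : H →ₗ[ℝ] ℝ :=
    { toFun := l, map_add' := hladd, map_smul' := fun c x => hlsmul c x }
  let Lcont : H →L[ℝ] ℝ := LinearMap.mkContinuous lmap R (fun z => by
    simpa [lmap, Real.norm_eq_abs] using hlbound z)
  refine ⟨φ, (InnerProductSpace.toDual ℝ H).symm Lcont, hφ, fun z => ?_⟩
  have : (⟪(InnerProductSpace.toDual ℝ H).symm Lcont, z⟫ : ℝ) = l z :=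
    InnerProductSpace.toDual_symm_apply
  rw [this]
  exact hl z

/-- From a compact operator and a bounded sequence, extract a subsequence whose image
converges strongly. -/
theorem exists_strong_subseq_of_compact {W F : Type*} [NormedAddCommGroup W] [NormedSpace ℝ W]
    [NormedAddCommGroup F] [NormedSpace ℝ F]
    (ι : W →L[ℝ] F) (hι : IsCompactOperator ι) (w : ℕ → W) (R : ℝ) (hw : ∀ k, ‖w k‖ ≤ R) :
    ∃ (φ : ℕ → ℕ) (y : F), StrictMono φ ∧ Tendsto (fun k => ι (w (φ k))) atTop (nhds y) := by
  obtain ⟨K, hK, hKmem⟩ := hι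
  obtain ⟨δ, hδ, hball⟩ := Metric.mem_nhds_iff.1 hKmem
  set r : ℝ := δ / (2 * (R + 1)) with hr
  have hr0 : 0 < r := by
    have hR : 0 ≤ R := le_trans (norm_nonneg _) (hw 0)
    positivity
  have hmem : ∀ k, ι (r • w k) ∈ K := by
    intro k
    apply hball
    have hR : 0 ≤ R := le_trans (norm_nonneg _) (hw 0)
    have : ‖r • w k‖ = r * ‖w k‖ := by
      rw [norm_smul, Real.norm_eq_abs, abs_of_pos hr0]
    rw [Metric.mem_ball, dist_zero_right, this]
    have h1 : r * ‖w k‖ ≤ r * R := mul_le_mul_of_nonneg_left (hw k) hr0.le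
    have h2 : r * R < δ := by
      rw [hr]
      rw [div_mul_eq_mul_div, div_lt_iff₀ (by positivity : (0:ℝ) < 2 * (R + 1))]
      nlinarith
    linarith
  obtain ⟨y', -, φ, hφ, hconv⟩ := hK.isSeqCompact (x := fun k => ι (r • w k)) hmem
  refine ⟨φ, r⁻¹ • y', hφ, ?_⟩
  have : ∀ k, ι (w (φ k)) = r⁻¹ • ι (r • w (φ k)) := by
    intro k
    rw [ContinuousLinearMap.map_smul, smul_smul, inv_mul_cancel₀ hr0.ne', one_smul]
  simp only [this]
  exact (hconv.const_smul r⁻¹)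

/-- Every bounded real sequence has a convergent subsequence. -/
theorem exists_real_subseq_tendsto (x : ℕ → ℝ) (C : ℝ) (hx : ∀ n, |x n| ≤ C) :
    ∃ (φ : ℕ → ℕ) (a : ℝ), StrictMono φ ∧ Tendsto (x ∘ φ) atTop (nhds a) := by
  have hmem : ∀ n, x n ∈ Set.Icc (-C) C := fun n => abs_le.1 (hx n)
  obtain ⟨a, -, φ, hφ, hconv⟩ := tendsto_subseq_of_bounded (Metric.isBounded_Icc (-C) C) hmem
  exact ⟨φ, a, hφ, hconv⟩

/-- `|g|^p` is integrable for `g ∈ L²` over a finite measure space, `0 < p ≤ 1`. -/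
theorem integrable_abs_rpow_of_memL2 {Ω : Type*} [MeasurableSpace Ω] {μ : Measure Ω}
    [IsFiniteMeasure μ] {p : ℝ} (hp0 : 0 < p) (hp1 : p ≤ 1) (g : Lp ℝ 2 μ) :
    Integrable (fun x => |g x| ^ p) μ := by
  have hg : Integrable (fun x => (g : Ω → ℝ) x) μ := (Lp.memLp g).integrable one_le_two
  have hmeas : AEStronglyMeasurable (fun x => |g x| ^ p) μ := by
    have hc : Continuous fun t : ℝ => t ^ p :=
      continuous_iff_continuousAt.2 fun t => Real.continuousAt_rpow_const t p (Or.inr hp0.le)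
    have := hc.comp_aestronglyMeasurable (Lp.aestronglyMeasurable g).norm
    simpa [Real.norm_eq_abs] using this
  refine (hg.abs.add (integrable_const 1)).mono' hmeas ?_
  refine Eventually.of_forall fun x => ?_
  simp only [Pi.add_apply]
  rw [Real.norm_eq_abs, abs_of_nonneg (Real.rpow_nonneg (abs_nonneg _) _)]
  rcases le_total (|g x|) 1 with h | h
  · have := Real.rpow_le_one (abs_nonneg (g x)) h hp0.le
    have h2 : (0:ℝ) ≤ |g x| := abs_nonneg _
    linarith
  · calc |g x| ^ p ≤ |g x| ^ (1:ℝ) := Real.rpow_le_rpow_of_exponent_le h hp1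
      _ = |g x| := Real.rpow_one _
      _ ≤ |g x| + 1 := by linarith

end Aux

set_option maxHeartbeats 1000000

/-- Existence of a global solution of the spatially sparse optimization problem:
minimize `Φ(u,w) = f(u) + (α/2)‖u‖²_U + (β/2)‖w‖²_W + γ ∫_Ω |ι w|^p dμ` over
`K = {(u,w) : |u(t,x)| ≤ (ι w)(x) a.e.}`, where `U = L²(I × Ω)`, `W` is a real Hilbert
space, `ι : W → L²(Ω,μ)` is a compact bounded linear operator, `α,β,γ > 0`, `p ∈ (0,1)`,
and `f` is sequentially weakly lower semicontinuous and bounded below by a continuous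
affine functional. -/
theorem exists_minimizer_sparse_problem {Ω W : Type*} [MeasurableSpace Ω]
    (μ : Measure Ω) [IsFiniteMeasure μ] (T : ℝ) (hT : 0 < T)
    [NormedAddCommGroup W] [InnerProductSpace ℝ W] [CompleteSpace W]
    (ι : W →L[ℝ] Lp ℝ 2 μ) (hι : IsCompactOperator ι)
    (α β γ p : ℝ) (hα : 0 < α) (hβ : 0 < β) (hγ : 0 < γ) (hp : p ∈ Set.Ioo (0 : ℝ) 1)
    (f : Lp ℝ 2 (timeSpaceMeasure μ T) → ℝ)
    (hlsc : ∀ (v : ℕ → Lp ℝ 2 (timeSpaceMeasure μ T)) (v₀ : Lp ℝ 2 (timeSpaceMeasure μ T)),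
      (∀ z : Lp ℝ 2 (timeSpaceMeasure μ T),
        Tendsto (fun k => (inner ℝ (v k) z : ℝ)) atTop (nhds (inner ℝ v₀ z))) →
      ((f v₀ : EReal) ≤ liminf (fun k => ((f (v k) : ℝ) : EReal)) atTop))
    (hbound : ∃ (g : Lp ℝ 2 (timeSpaceMeasure μ T) →L[ℝ] ℝ) (c : ℝ),
      ∀ u : Lp ℝ 2 (timeSpaceMeasure μ T), g u + c ≤ f u) :
    ∃ (ubar : Lp ℝ 2 (timeSpaceMeasure μ T)) (wbar : W),
      (∀ᵐ q ∂(timeSpaceMeasure μ T), |ubar q| ≤ (ι wbar) q.2) ∧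
      ∀ (u : Lp ℝ 2 (timeSpaceMeasure μ T)) (w : W),
        (∀ᵐ q ∂(timeSpaceMeasure μ T), |u q| ≤ (ι w) q.2) →
        f ubar + α / 2 * ‖ubar‖ ^ 2 + β / 2 * ‖wbar‖ ^ 2 +
            γ * ∫ x, |(ι wbar) x| ^ p ∂μ ≤
          f u + α / 2 * ‖u‖ ^ 2 + β / 2 * ‖w‖ ^ 2 + γ * ∫ x, |(ι w) x| ^ p ∂μ := by
  obtain ⟨hp0, hp1⟩ := hp
  obtain ⟨g, c, hgc⟩ := hbound
  haveI hfinI : IsFiniteMeasure (volume.restrict (Set.Ioo (0:ℝ) T)) :=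
    ⟨by rw [Measure.restrict_apply_univ]; exact measure_Ioo_lt_top⟩
  haveI hfinν : IsFiniteMeasure (timeSpaceMeasure μ T) := by
    unfold timeSpaceMeasure; infer_instance
  -- the projection onto the second factor is quasi measure preserving
  have hmap : Measure.map Prod.snd (timeSpaceMeasure μ T) = (ENNReal.ofReal T) • μ := by
    unfold timeSpaceMeasure
    rw [Measure.map_snd_prod, Measure.restrict_apply_univ, Real.volume_Ioo, sub_zero]
  have hqmp : Measure.QuasiMeasurePreserving (Prod.snd : ℝ × Ω → Ω) (timeSpaceMeasure μ T) μ :=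
    ⟨measurable_snd, by rw [hmap]; exact Measure.smul_absolutelyContinuous⟩
  have hintc : ∀ d : Lp ℝ 2 μ, Integrable (fun q : ℝ × Ω => d q.2) (timeSpaceMeasure μ T) := by
    intro d
    have hd : Integrable (fun x => (d : Ω → ℝ) x) μ := (Lp.memLp d).integrable one_le_two
    have hd2 : Integrable (fun x => (d : Ω → ℝ) x) (Measure.map Prod.snd (timeSpaceMeasure μ T)) := by
      rw [hmap]; exact hd.smul_measure ENNReal.ofReal_ne_top
    exact (integrable_map_measure hd2.1 measurable_snd.aemeasurable).1 hd2
  have habs : ∀ d : Lp ℝ 2 μ, ∫ q, |d q.2| ∂(timeSpaceMeasure μ T) = T * ∫ x, |d x| ∂μ := by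
    intro d
    have hd : Integrable (fun x => (d : Ω → ℝ) x) μ := (Lp.memLp d).integrable one_le_two
    have hasm : AEStronglyMeasurable (fun x => |(d : Ω → ℝ) x|) (Measure.map Prod.snd (timeSpaceMeasure μ T)) := by
      rw [hmap]
      have := (hd.1.mono_ac (Measure.smul_absolutelyContinuous (c := ENNReal.ofReal T))).norm
      simpa [Real.norm_eq_abs] using this
    calc ∫ q, |d q.2| ∂(timeSpaceMeasure μ T) = ∫ x, |d x| ∂(Measure.map Prod.snd (timeSpaceMeasure μ T)) :=
          (integral_map measurable_snd.aemeasurable hasm).symm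
      _ = T * ∫ x, |d x| ∂μ := by
          rw [hmap, integral_smul_measure, ENNReal.toReal_ofReal hT.le, smul_eq_mul]
  have hL1bound : ∀ d : Lp ℝ 2 μ, ∫ x, |d x| ∂μ ≤ ((μ Set.univ) ^ (1/2 : ℝ)).toReal * ‖d‖ := by
    intro d
    have h1 : ∫ x, |d x| ∂μ = (eLpNorm (d : Ω → ℝ) 1 μ).toReal := by
      rw [eLpNorm_one_eq_lintegral_enorm]
      have := integral_norm_eq_lintegral_enorm (Lp.aestronglyMeasurable d)
      simpa [Real.norm_eq_abs] using this
    have h2 := eLpNorm_le_eLpNorm_mul_rpow_measure_univ (p := 1) (q := 2) (μ := μ)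
      one_le_two (Lp.aestronglyMeasurable d)
    have hexp : (1:ℝ) / (1:ℝ≥0∞).toReal - 1 / (2:ℝ≥0∞).toReal = 1/2 := by
      rw [ENNReal.toReal_one, ENNReal.toReal_ofNat]; norm_num
    rw [hexp] at h2
    have h3 : eLpNorm (d : Ω → ℝ) 2 μ = ENNReal.ofReal ‖d‖ := by
      rw [Lp.norm_def, ENNReal.ofReal_toReal (Lp.eLpNorm_ne_top d)]
    rw [h3] at h2
    have hne : ENNReal.ofReal ‖d‖ * (μ Set.univ) ^ (1/2 : ℝ) ≠ ⊤ :=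
      ENNReal.mul_ne_top ENNReal.ofReal_ne_top
        (ENNReal.rpow_ne_top_of_nonneg (by norm_num) (measure_ne_top μ _))
    have h4 := ENNReal.toReal_mono hne h2
    rw [ENNReal.toReal_mul, ENNReal.toReal_ofReal (norm_nonneg _)] at h4
    rw [h1]
    linarith [h4, mul_comm ‖d‖ (((μ Set.univ) ^ (1/2 : ℝ)).toReal)]
  -- the objective functional and admissible set
  set Φ : Lp ℝ 2 (timeSpaceMeasure μ T) × W → ℝ := fun x =>
    f x.1 + α / 2 * ‖x.1‖ ^ 2 + β / 2 * ‖x.2‖ ^ 2 + γ * ∫ t, |(ι x.2) t| ^ p ∂μ with hΦdef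
  set Kset : Set (Lp ℝ 2 (timeSpaceMeasure μ T) × W) := {x | ∀ᵐ q ∂(timeSpaceMeasure μ T), |x.1 q| ≤ (ι x.2) q.2} with hKdef
  clear_value Φ Kset
  have hJnonneg : ∀ w : W, 0 ≤ ∫ t, |(ι w) t| ^ p ∂μ :=
    fun w => integral_nonneg fun t => Real.rpow_nonneg (abs_nonneg _) _
  have hglb : ∀ u : Lp ℝ 2 (timeSpaceMeasure μ T), -(‖g‖ * ‖u‖) + c ≤ f u := by
    intro u
    have h1 := hgc u
    have h2 : |g u| ≤ ‖g‖ * ‖u‖ := by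
      have := g.le_opNorm u
      simpa [Real.norm_eq_abs] using this
    linarith [neg_abs_le (g u)]
  have hco : ∀ x : Lp ℝ 2 (timeSpaceMeasure μ T) × W,
      c - ‖g‖^2 / α + α/4 * ‖x.1‖^2 + β/2 * ‖x.2‖^2 ≤ Φ x := by
    intro x
    have h1 := hglb x.1
    have h2 := hJnonneg x.2
    have h3 : ‖g‖ * ‖x.1‖ ≤ α/4 * ‖x.1‖^2 + ‖g‖^2/α := by
      have hmul : α * (‖g‖ * ‖x.1‖) ≤ α * (α/4 * ‖x.1‖^2 + ‖g‖^2/α) := by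
        have heq : α * (α/4 * ‖x.1‖^2 + ‖g‖^2/α) = α^2/4 * ‖x.1‖^2 + ‖g‖^2 := by
          field_simp
        rw [heq]
        nlinarith [sq_nonneg (α * ‖x.1‖ - 2*‖g‖)]
      exact le_of_mul_le_mul_left hmul hα
    have h4 : 0 ≤ γ * ∫ t, |(ι x.2) t| ^ p ∂μ := mul_nonneg hγ.le h2
    have h5 : 0 ≤ α/4 * ‖x.1‖^2 := by positivity
    rw [hΦdef]
    show c - ‖g‖^2 / α + α/4 * ‖x.1‖^2 + β/2 * ‖x.2‖^2 ≤
      f x.1 + α / 2 * ‖x.1‖ ^ 2 + β / 2 * ‖x.2‖ ^ 2 + γ * ∫ t, |(ι x.2) t| ^ p ∂μ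
    nlinarith [sq_nonneg ‖x.1‖]
  -- the admissible set is nonempty
  have h0K : ((0 : Lp ℝ 2 (timeSpaceMeasure μ T)), (0 : W)) ∈ Kset := by
    rw [hKdef]
    have h1 : (⇑(0 : Lp ℝ 2 (timeSpaceMeasure μ T)) : ℝ × Ω → ℝ) =ᵐ[(timeSpaceMeasure μ T)] 0 := Lp.coeFn_zero _ _ _
    have h2 : (⇑(ι (0:W)) : Ω → ℝ) =ᵐ[μ] 0 := by
      rw [map_zero]; exact Lp.coeFn_zero _ _ _
    have h3 := hqmp.ae_eq h2
    show ∀ᵐ q ∂(timeSpaceMeasure μ T), |(0 : Lp ℝ 2 (timeSpaceMeasure μ T)) q| ≤ (ι (0:W)) q.2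
    filter_upwards [h1, h3] with q hq1 hq2
    simp only [Pi.zero_apply] at hq1
    simp only [Function.comp_apply, Pi.zero_apply] at hq2
    rw [hq1, hq2]
    simp
  -- the infimum
  set m : ℝ := sInf (Φ '' Kset) with hm
  have hbddB : BddBelow (Φ '' Kset) := by
    refine ⟨c - ‖g‖^2/α, ?_⟩
    intro y hy
    obtain ⟨x, hx, rfl⟩ := hy
    have h1 := hco x
    have h2 : 0 ≤ α/4 * ‖x.1‖^2 := by positivity
    have h3 : 0 ≤ β/2 * ‖x.2‖^2 := by positivity
    linarith
  have hmle : ∀ x ∈ Kset, m ≤ Φ x := fun x hx => csInf_le hbddB (Set.mem_image_of_mem Φ hx)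
  have hseq : ∀ k : ℕ, ∃ x, x ∈ Kset ∧ Φ x < m + 1/((k:ℝ)+1) := by
    intro k
    obtain ⟨y, ⟨x, hx, rfl⟩, hy⟩ := Real.lt_sInf_add_pos ⟨_, Set.mem_image_of_mem Φ h0K⟩
      (by positivity : (0:ℝ) < 1/((k:ℝ)+1))
    exact ⟨x, hx, hy⟩
  choose xs hxK hxlt using hseq
  clear_value m
  have hΦub : ∀ k, Φ (xs k) ≤ m + 1 := by
    intro k
    have h1 : (1:ℝ)/((k:ℝ)+1) ≤ 1 := by
      rw [div_le_one (by positivity)]; linarith [Nat.cast_nonneg (α := ℝ) k]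
    linarith [hxlt k]
  have hΦtends : Tendsto (fun k => Φ (xs k)) atTop (nhds m) := by
    have h1 : Tendsto (fun k : ℕ => m + 1/((k:ℝ)+1)) atTop (nhds (m + 0)) :=
      tendsto_const_nhds.add tendsto_one_div_add_atTop_nhds_zero_nat
    rw [add_zero] at h1
    exact tendsto_of_tendsto_of_tendsto_of_le_of_le tendsto_const_nhds h1
      (fun k => hmle _ (hxK k)) (fun k => (hxlt k).le)
  -- coercivity bounds
  set D : ℝ := m + 1 - c + ‖g‖^2/α with hD
  set Rb : ℝ := Real.sqrt (max (4*D/α) (2*D/β)) with hRb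
  clear_value D
  have hbu : ∀ k, ‖(xs k).1‖ ≤ Rb := by
    intro k
    have h1 := hco (xs k)
    have h2 := hΦub k
    have h3 : 0 ≤ β/2 * ‖(xs k).2‖^2 := by positivity
    have h4' : α/4 * ‖(xs k).1‖^2 ≤ D := by linarith
    have h4 : ‖(xs k).1‖^2 ≤ 4*D/α := by
      rw [le_div_iff₀ hα]; linarith
    rw [hRb, show ‖(xs k).1‖ = Real.sqrt (‖(xs k).1‖^2) by
      rw [Real.sqrt_sq (norm_nonneg _)]]
    exact Real.sqrt_le_sqrt (le_trans h4 (le_max_left _ _))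
  have hbw : ∀ k, ‖(xs k).2‖ ≤ Rb := by
    intro k
    have h1 := hco (xs k)
    have h2 := hΦub k
    have h3 : 0 ≤ α/4 * ‖(xs k).1‖^2 := by positivity
    have h4' : β/2 * ‖(xs k).2‖^2 ≤ D := by linarith
    have h4 : ‖(xs k).2‖^2 ≤ 2*D/β := by
      rw [le_div_iff₀ hβ]; linarith
    rw [hRb, show ‖(xs k).2‖ = Real.sqrt (‖(xs k).2‖^2) by
      rw [Real.sqrt_sq (norm_nonneg _)]]
    exact Real.sqrt_le_sqrt (le_trans h4 (le_max_right _ _))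
  have hRb0 : 0 ≤ Rb := Real.sqrt_nonneg _
  -- bounds for the real-valued sequences
  set Cf : ℝ := |c| + ‖g‖*Rb + |m| + 1 with hCf
  have hCfAll : ∀ n, |f ((xs n).1)| ≤ Cf := by
    intro n
    have h1 := hglb (xs n).1
    have h2 : ‖g‖ * ‖(xs n).1‖ ≤ ‖g‖ * Rb :=
      mul_le_mul_of_nonneg_left (hbu n) (norm_nonneg _)
    have h3 := hΦub n
    have h4 : 0 ≤ α/2 * ‖(xs n).1‖^2 := by positivity
    have h5 : 0 ≤ β/2 * ‖(xs n).2‖^2 := by positivity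
    have h6 : 0 ≤ γ * ∫ t, |(ι (xs n).2) t| ^ p ∂μ := mul_nonneg hγ.le (hJnonneg _)
    have h7 : Φ (xs n) = f ((xs n).1) + α/2 * ‖(xs n).1‖^2 + β/2 * ‖(xs n).2‖^2
        + γ * ∫ t, |(ι (xs n).2) t| ^ p ∂μ := by rw [hΦdef]
    rw [h7] at h3
    refine abs_le.2 ⟨?_, ?_⟩
    · linarith [neg_abs_le c, abs_nonneg m]
    · linarith [abs_nonneg c, le_abs_self m, mul_nonneg (norm_nonneg g) hRb0]
  set CJ : ℝ := (|m| + 1 + |c| + ‖g‖*Rb)/γ with hCJ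
  have hCJAll : ∀ n, |∫ t, |(ι (xs n).2) t| ^ p ∂μ| ≤ CJ := by
    intro n
    have h1 := hglb (xs n).1
    have h2 : ‖g‖ * ‖(xs n).1‖ ≤ ‖g‖ * Rb :=
      mul_le_mul_of_nonneg_left (hbu n) (norm_nonneg _)
    have h3 := hΦub n
    have h4 : 0 ≤ α/2 * ‖(xs n).1‖^2 := by positivity
    have h5 : 0 ≤ β/2 * ‖(xs n).2‖^2 := by positivity
    have h7 : Φ (xs n) = f ((xs n).1) + α/2 * ‖(xs n).1‖^2 + β/2 * ‖(xs n).2‖^2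
        + γ * ∫ t, |(ι (xs n).2) t| ^ p ∂μ := by rw [hΦdef]
    rw [h7] at h3
    have h8 : γ * ∫ t, |(ι (xs n).2) t| ^ p ∂μ ≤ |m| + 1 + |c| + ‖g‖*Rb := by
      linarith [neg_abs_le c, le_abs_self m]
    rw [abs_of_nonneg (hJnonneg _)]
    rw [hCJ, le_div_iff₀ hγ]
    linarith [h8]
  -- subsequence extractions
  obtain ⟨φ₁, ubar, hφ₁, hU1⟩ := exists_weak_subseq_limit (fun k => (xs k).1) Rb hbu
  obtain ⟨φ₂, wbar, hφ₂, hW1⟩ :=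
    exists_weak_subseq_limit (fun k => (xs (φ₁ k)).2) Rb (fun k => hbw _)
  obtain ⟨φ₃, yst, hφ₃, hY1⟩ :=
    exists_strong_subseq_of_compact ι hι (fun k => (xs (φ₁ (φ₂ k))).2) Rb (fun k => hbw _)
  obtain ⟨φ₄, Fl, hφ₄, hF1⟩ := exists_real_subseq_tendsto
    (fun k => f ((xs (φ₁ (φ₂ (φ₃ k)))).1)) Cf (fun k => hCfAll _)
  obtain ⟨φ₅, al, hφ₅, hA1⟩ := exists_real_subseq_tendsto
    (fun k => ‖(xs (φ₁ (φ₂ (φ₃ (φ₄ k))))).1‖) Rb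
    (fun k => by rw [abs_norm]; exact hbu _)
  obtain ⟨φ₆, bl, hφ₆, hB1⟩ := exists_real_subseq_tendsto
    (fun k => ‖(xs (φ₁ (φ₂ (φ₃ (φ₄ (φ₅ k)))))).2‖) Rb
    (fun k => by rw [abs_norm]; exact hbw _)
  obtain ⟨φ₇, jl, hφ₇, hJ1⟩ := exists_real_subseq_tendsto
    (fun k => ∫ t, |(ι ((xs (φ₁ (φ₂ (φ₃ (φ₄ (φ₅ (φ₆ k))))))).2)) t| ^ p ∂μ) CJ
    (fun k => hCJAll _)
  set ρ : ℕ → ℕ := fun k => φ₁ (φ₂ (φ₃ (φ₄ (φ₅ (φ₆ (φ₇ k)))))) with hρ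
  have hρmono : StrictMono ρ :=
    hφ₁.comp (hφ₂.comp (hφ₃.comp (hφ₄.comp (hφ₅.comp (hφ₆.comp hφ₇)))))
  have t7 : Tendsto φ₇ atTop atTop := hφ₇.tendsto_atTop
  have t67 : Tendsto (fun k => φ₆ (φ₇ k)) atTop atTop := (hφ₆.comp hφ₇).tendsto_atTop
  have t567 : Tendsto (fun k => φ₅ (φ₆ (φ₇ k))) atTop atTop :=
    (hφ₅.comp (hφ₆.comp hφ₇)).tendsto_atTop
  have t4567 : Tendsto (fun k => φ₄ (φ₅ (φ₆ (φ₇ k)))) atTop atTop :=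
    (hφ₄.comp (hφ₅.comp (hφ₆.comp hφ₇))).tendsto_atTop
  have t34567 : Tendsto (fun k => φ₃ (φ₄ (φ₅ (φ₆ (φ₇ k))))) atTop atTop :=
    (hφ₃.comp (hφ₄.comp (hφ₅.comp (hφ₆.comp hφ₇)))).tendsto_atTop
  have t234567 : Tendsto (fun k => φ₂ (φ₃ (φ₄ (φ₅ (φ₆ (φ₇ k)))))) atTop atTop :=
    (hφ₂.comp (hφ₃.comp (hφ₄.comp (hφ₅.comp (hφ₆.comp hφ₇))))).tendsto_atTop
  have hU : ∀ z, Tendsto (fun k => (inner ℝ ((xs (ρ k)).1) z : ℝ)) atTop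
      (nhds (inner ℝ ubar z)) := fun z => (hU1 z).comp t234567
  have hW : ∀ z : W, Tendsto (fun k => (inner ℝ ((xs (ρ k)).2) z : ℝ)) atTop
      (nhds (inner ℝ wbar z)) := fun z => (hW1 z).comp t34567
  have hY : Tendsto (fun k => ι ((xs (ρ k)).2)) atTop (nhds yst) := hY1.comp t4567
  have hF : Tendsto (fun k => f ((xs (ρ k)).1)) atTop (nhds Fl) := hF1.comp t567
  have hA : Tendsto (fun k => ‖(xs (ρ k)).1‖) atTop (nhds al) := hA1.comp t67
  have hB : Tendsto (fun k => ‖(xs (ρ k)).2‖) atTop (nhds bl) := hB1.comp t7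
  have hJt : Tendsto (fun k => ∫ t, |(ι ((xs (ρ k)).2)) t| ^ p ∂μ) atTop (nhds jl) := hJ1
  -- identify the strong limit with ι wbar
  have hid : yst = ι wbar := by
    refine ext_inner_right ℝ fun z => ?_
    have h1 : Tendsto (fun k => (inner ℝ (ι ((xs (ρ k)).2)) z : ℝ)) atTop
        (nhds (inner ℝ yst z)) := hY.inner tendsto_const_nhds
    have h3 := hW ((ContinuousLinearMap.adjoint ι) z)
    have h4 : ∀ k, (inner ℝ ((xs (ρ k)).2) ((ContinuousLinearMap.adjoint ι) z) : ℝ)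
        = inner ℝ (ι ((xs (ρ k)).2)) z := fun k =>
      ContinuousLinearMap.adjoint_inner_right ι _ _
    have h5 : (inner ℝ wbar ((ContinuousLinearMap.adjoint ι) z) : ℝ) = inner ℝ (ι wbar) z :=
      ContinuousLinearMap.adjoint_inner_right ι _ _
    simp only [h4, h5] at h3
    exact tendsto_nhds_unique h1 h3
  rw [hid] at hY
  have hdnorm : Tendsto (fun k => ‖ι ((xs (ρ k)).2) - ι wbar‖) atTop (nhds 0) :=
    tendsto_iff_norm_sub_tendsto_zero.1 hY
  have hL1 : Tendsto (fun k => ∫ x, |(ι ((xs (ρ k)).2) - ι wbar : Lp ℝ 2 μ) x| ∂μ)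
      atTop (nhds 0) := by
    refine squeeze_zero (fun k => integral_nonneg fun x => abs_nonneg _)
      (fun k => hL1bound _) ?_
    have := hdnorm.const_mul (((μ Set.univ) ^ (1/2:ℝ)).toReal)
    simpa using this
  have hK' : ∀ n, ∀ᵐ q ∂(timeSpaceMeasure μ T), |(xs n).1 q| ≤ (ι (xs n).2) q.2 := by
    intro n
    have := hxK n
    rw [hKdef] at this
    exact this
  -- feasibility of the limit point
  have hvint : Integrable (fun q : ℝ × Ω => (ι wbar) q.2) (timeSpaceMeasure μ T) := hintc _
  have hwcomp : ∀ k, (fun q : ℝ × Ω => (ι ((xs (ρ k)).2)) q.2 - (ι wbar) q.2)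
      =ᵐ[timeSpaceMeasure μ T]
      (fun q : ℝ × Ω => (ι ((xs (ρ k)).2) - ι wbar : Lp ℝ 2 μ) q.2) := by
    intro k
    have h1 : (⇑(ι ((xs (ρ k)).2) - ι wbar) : Ω → ℝ)
        =ᵐ[μ] ⇑(ι ((xs (ρ k)).2)) - ⇑(ι wbar) := Lp.coeFn_sub _ _
    have h2 := hqmp.ae_eq h1
    filter_upwards [h2] with q hq
    simp only [Function.comp_apply, Pi.sub_apply] at hq
    rw [hq]
  have hkey : ∀ (s : Set (ℝ × Ω)), MeasurableSet s → (timeSpaceMeasure μ T) s < ⊤ →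
      (∫ q in s, ubar q ∂(timeSpaceMeasure μ T)
          ≤ ∫ q in s, (ι wbar) q.2 ∂(timeSpaceMeasure μ T) ∧
        ∫ q in s, (-(ubar q)) ∂(timeSpaceMeasure μ T)
          ≤ ∫ q in s, (ι wbar) q.2 ∂(timeSpaceMeasure μ T)) := by
    intro s hs hνs
    set χ : Lp ℝ 2 (timeSpaceMeasure μ T) := indicatorConstLp 2 hs hνs.ne (1:ℝ) with hχ
    have hinner : ∀ uu : Lp ℝ 2 (timeSpaceMeasure μ T),
        (inner ℝ uu χ : ℝ) = ∫ q in s, uu q ∂(timeSpaceMeasure μ T) := by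
      intro uu
      rw [real_inner_comm, hχ, L2.inner_indicatorConstLp_eq_setIntegral_inner]
      simp [RCLike.inner_apply]
    have hAtends : Tendsto (fun k => ∫ q in s, ((xs (ρ k)).1 : ℝ × Ω → ℝ) q
        ∂(timeSpaceMeasure μ T)) atTop
        (nhds (∫ q in s, ubar q ∂(timeSpaceMeasure μ T))) := by
      have h2 := hU χ
      simp only [hinner] at h2
      exact h2
    have hBtends : Tendsto (fun k => ∫ q in s, (ι ((xs (ρ k)).2)) q.2
        ∂(timeSpaceMeasure μ T)) atTop
        (nhds (∫ q in s, (ι wbar) q.2 ∂(timeSpaceMeasure μ T))) := by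
      have key : ∀ k, |∫ q in s, (ι ((xs (ρ k)).2)) q.2 ∂(timeSpaceMeasure μ T)
          - ∫ q in s, (ι wbar) q.2 ∂(timeSpaceMeasure μ T)|
          ≤ T * ∫ x, |(ι ((xs (ρ k)).2) - ι wbar : Lp ℝ 2 μ) x| ∂μ := by
        intro k
        have hint1 : Integrable (fun q : ℝ × Ω => (ι ((xs (ρ k)).2)) q.2)
            (timeSpaceMeasure μ T) := hintc _
        have hsub : ∫ q in s, (ι ((xs (ρ k)).2)) q.2 ∂(timeSpaceMeasure μ T)
            - ∫ q in s, (ι wbar) q.2 ∂(timeSpaceMeasure μ T)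
            = ∫ q in s, ((ι ((xs (ρ k)).2)) q.2 - (ι wbar) q.2) ∂(timeSpaceMeasure μ T) :=
          (integral_sub hint1.restrict hvint.restrict).symm
        rw [hsub]
        have h5 : |∫ q in s, ((ι ((xs (ρ k)).2)) q.2 - (ι wbar) q.2)
            ∂(timeSpaceMeasure μ T)|
            ≤ ∫ q in s, |(ι ((xs (ρ k)).2)) q.2 - (ι wbar) q.2| ∂(timeSpaceMeasure μ T) := by
          have := norm_integral_le_integral_norm (μ := (timeSpaceMeasure μ T).restrict s)
            (fun q : ℝ × Ω => (ι ((xs (ρ k)).2)) q.2 - (ι wbar) q.2)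
          simpa [Real.norm_eq_abs] using this
        have h6 : ∫ q in s, |(ι ((xs (ρ k)).2)) q.2 - (ι wbar) q.2| ∂(timeSpaceMeasure μ T)
            ≤ ∫ q, |(ι ((xs (ρ k)).2)) q.2 - (ι wbar) q.2| ∂(timeSpaceMeasure μ T) := by
          refine setIntegral_le_integral ((hint1.sub hvint).abs) ?_
          exact Eventually.of_forall fun q => abs_nonneg _
        have h7 : ∫ q, |(ι ((xs (ρ k)).2)) q.2 - (ι wbar) q.2| ∂(timeSpaceMeasure μ T)
            = ∫ q, |(ι ((xs (ρ k)).2) - ι wbar : Lp ℝ 2 μ) q.2| ∂(timeSpaceMeasure μ T) := by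
          refine integral_congr_ae ?_
          filter_upwards [hwcomp k] with q hq
          rw [hq]
        rw [h7] at h6
        have h8 := habs (ι ((xs (ρ k)).2) - ι wbar)
        linarith
      rw [tendsto_iff_dist_tendsto_zero]
      refine squeeze_zero
        (g := fun k => T * ∫ x, |(ι ((xs (ρ k)).2) - ι wbar : Lp ℝ 2 μ) x| ∂μ)
        (fun k => dist_nonneg) (fun k => ?_) ?_
      · rw [Real.dist_eq]; exact key k
      · simpa using hL1.const_mul T
    have hcompk : ∀ k, ∫ q in s, ((xs (ρ k)).1 : ℝ × Ω → ℝ) q ∂(timeSpaceMeasure μ T)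
        ≤ ∫ q in s, (ι ((xs (ρ k)).2)) q.2 ∂(timeSpaceMeasure μ T) := by
      intro k
      refine integral_mono_ae ((Lp.memLp _).integrable one_le_two).restrict
        (hintc _).restrict ?_
      exact ae_restrict_of_ae ((hK' (ρ k)).mono fun q hq => le_trans (le_abs_self _) hq)
    have hcompk' : ∀ k, ∫ q in s, (-(((xs (ρ k)).1 : ℝ × Ω → ℝ) q)) ∂(timeSpaceMeasure μ T)
        ≤ ∫ q in s, (ι ((xs (ρ k)).2)) q.2 ∂(timeSpaceMeasure μ T) := by
      intro k
      refine integral_mono_ae ((Lp.memLp _).integrable one_le_two).neg.restrict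
        (hintc _).restrict ?_
      exact ae_restrict_of_ae ((hK' (ρ k)).mono fun q hq =>
        le_trans (neg_le_abs _) hq)
    refine ⟨le_of_tendsto_of_tendsto' hAtends hBtends hcompk, ?_⟩
    have hAneg : Tendsto (fun k => ∫ q in s, (-(((xs (ρ k)).1 : ℝ × Ω → ℝ) q))
        ∂(timeSpaceMeasure μ T)) atTop
        (nhds (∫ q in s, (-(ubar q)) ∂(timeSpaceMeasure μ T))) := by
      simp only [integral_neg]
      exact hAtends.neg
    exact le_of_tendsto_of_tendsto' hAneg hBtends hcompk'
  have hfeas : ∀ᵐ q ∂(timeSpaceMeasure μ T), |ubar q| ≤ (ι wbar) q.2 := by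
    have h1 : (⇑ubar : ℝ × Ω → ℝ) ≤ᵐ[timeSpaceMeasure μ T] fun q => (ι wbar) q.2 :=
      ae_le_of_forall_setIntegral_le ((Lp.memLp ubar).integrable one_le_two) hvint
        (fun s hs hl => (hkey s hs hl).1)
    have h2 : (fun q => -(ubar q)) ≤ᵐ[timeSpaceMeasure μ T] fun q => (ι wbar) q.2 :=
      ae_le_of_forall_setIntegral_le ((Lp.memLp ubar).integrable one_le_two).neg hvint
        (fun s hs hl => (hkey s hs hl).2)
    filter_upwards [h1, h2] with q hq1 hq2
    exact abs_le.2 ⟨by linarith, hq1⟩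
  -- lower semicontinuity of f
  have hfub : f ubar ≤ Fl := by
    have hws := hlsc (fun k => (xs (ρ k)).1) ubar hU
    have hliminf : liminf (fun k => ((f ((xs (ρ k)).1) : ℝ) : EReal)) atTop = (Fl : EReal) :=
      (EReal.tendsto_coe.2 hF).liminf_eq
    rw [hliminf] at hws
    exact_mod_cast hws
  -- weak lower semicontinuity of the norms
  have hal : ‖ubar‖ ≤ al := by
    have hal0 : 0 ≤ al := ge_of_tendsto' hA fun k => norm_nonneg _
    rcases eq_or_ne ubar 0 with h0 | h0
    · simp [h0, hal0]
    · have h1 : Tendsto (fun k => (inner ℝ ((xs (ρ k)).1) ubar : ℝ)) atTop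
        (nhds (inner ℝ ubar ubar)) := hU ubar
      have h2 : ∀ k, (inner ℝ ((xs (ρ k)).1) ubar : ℝ) ≤ ‖(xs (ρ k)).1‖ * ‖ubar‖ :=
        fun k => real_inner_le_norm _ _
      have h3 : Tendsto (fun k => ‖(xs (ρ k)).1‖ * ‖ubar‖) atTop (nhds (al * ‖ubar‖)) :=
        hA.mul_const _
      have h4 : (inner ℝ ubar ubar : ℝ) ≤ al * ‖ubar‖ := le_of_tendsto_of_tendsto' h1 h3 h2
      have h5 : ‖ubar‖ * ‖ubar‖ ≤ al * ‖ubar‖ := by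
        rwa [real_inner_self_eq_norm_mul_norm] at h4
      exact le_of_mul_le_mul_right h5 (norm_pos_iff.2 h0)
  have hbl : ‖wbar‖ ≤ bl := by
    have hbl0 : 0 ≤ bl := ge_of_tendsto' hB fun k => norm_nonneg _
    rcases eq_or_ne wbar 0 with h0 | h0
    · simp [h0, hbl0]
    · have h1 : Tendsto (fun k => (inner ℝ ((xs (ρ k)).2) wbar : ℝ)) atTop
        (nhds (inner ℝ wbar wbar)) := hW wbar
      have h2 : ∀ k, (inner ℝ ((xs (ρ k)).2) wbar : ℝ) ≤ ‖(xs (ρ k)).2‖ * ‖wbar‖ :=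
        fun k => real_inner_le_norm _ _
      have h3 : Tendsto (fun k => ‖(xs (ρ k)).2‖ * ‖wbar‖) atTop (nhds (bl * ‖wbar‖)) :=
        hB.mul_const _
      have h4 : (inner ℝ wbar wbar : ℝ) ≤ bl * ‖wbar‖ := le_of_tendsto_of_tendsto' h1 h3 h2
      have h5 : ‖wbar‖ * ‖wbar‖ ≤ bl * ‖wbar‖ := by
        rwa [real_inner_self_eq_norm_mul_norm] at h4
      exact le_of_mul_le_mul_right h5 (norm_pos_iff.2 h0)
  -- lower semicontinuity of the p-term via Fatou
  have hjl : ∫ t, |(ι wbar) t| ^ p ∂μ ≤ jl := by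
    have hsnorm : Tendsto (fun k => eLpNorm ((⇑(ι ((xs (ρ k)).2)) : Ω → ℝ) - ⇑(ι wbar)) 2 μ)
        atTop (nhds 0) := by
      have heq : ∀ k, eLpNorm ((⇑(ι ((xs (ρ k)).2)) : Ω → ℝ) - ⇑(ι wbar)) 2 μ
          = ENNReal.ofReal ‖ι ((xs (ρ k)).2) - ι wbar‖ := by
        intro k
        rw [← eLpNorm_congr_ae (Lp.coeFn_sub _ _), Lp.norm_def,
          ENNReal.ofReal_toReal (Lp.eLpNorm_ne_top _)]
      simp only [heq]
      have h0 : Tendsto (fun k => ENNReal.ofReal ‖ι ((xs (ρ k)).2) - ι wbar‖) atTop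
          (nhds (ENNReal.ofReal 0)) :=
        (ENNReal.continuous_ofReal.tendsto _).comp hdnorm
      simpa using h0
    have hTIM : TendstoInMeasure μ (fun k => (⇑(ι ((xs (ρ k)).2)) : Ω → ℝ)) atTop
        ⇑(ι wbar) :=
      tendstoInMeasure_of_tendsto_eLpNorm (by norm_num)
        (fun k => Lp.aestronglyMeasurable _) (Lp.aestronglyMeasurable _) hsnorm
    obtain ⟨σ, hσ, hae⟩ := hTIM.exists_seq_tendsto_ae
    have hJσ : Tendsto (fun j => ∫ t, |(ι ((xs (ρ (σ j))).2)) t| ^ p ∂μ) atTop (nhds jl) :=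
      hJt.comp hσ.tendsto_atTop
    have hjl0 : 0 ≤ jl := ge_of_tendsto' hJσ fun j => hJnonneg _
    have haeG : ∀ᵐ t ∂μ, Tendsto (fun j => ENNReal.ofReal (|(ι ((xs (ρ (σ j))).2)) t| ^ p))
        atTop (nhds (ENNReal.ofReal (|(ι wbar) t| ^ p))) := by
      filter_upwards [hae] with t ht
      have h1 : Tendsto (fun j => |(ι ((xs (ρ (σ j))).2)) t|) atTop (nhds (|(ι wbar) t|)) :=
        (continuous_abs.tendsto _).comp ht
      have h2 : Tendsto (fun j => |(ι ((xs (ρ (σ j))).2)) t| ^ p) atTop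
          (nhds (|(ι wbar) t| ^ p)) :=
        ((Real.continuousAt_rpow_const _ p (Or.inr hp0.le)).tendsto).comp h1
      exact (ENNReal.continuous_ofReal.tendsto _).comp h2
    have haeEq : ∀ᵐ t ∂μ, ENNReal.ofReal (|(ι wbar) t| ^ p)
        = liminf (fun j => ENNReal.ofReal (|(ι ((xs (ρ (σ j))).2)) t| ^ p)) atTop := by
      filter_upwards [haeG] with t ht
      exact ht.liminf_eq.symm
    have haemeas : ∀ j, AEMeasurable
        (fun t => ENNReal.ofReal (|(ι ((xs (ρ (σ j))).2)) t| ^ p)) μ := by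
      intro j
      exact (integrable_abs_rpow_of_memL2 hp0 hp1.le (ι ((xs (ρ (σ j))).2))).1.aemeasurable.ennreal_ofReal
    have hFatou : ∫⁻ t, ENNReal.ofReal (|(ι wbar) t| ^ p) ∂μ
        ≤ liminf (fun j => ∫⁻ t, ENNReal.ofReal (|(ι ((xs (ρ (σ j))).2)) t| ^ p) ∂μ) atTop := by
      calc ∫⁻ t, ENNReal.ofReal (|(ι wbar) t| ^ p) ∂μ
          = ∫⁻ t, liminf (fun j => ENNReal.ofReal (|(ι ((xs (ρ (σ j))).2)) t| ^ p)) atTop ∂μ :=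
            lintegral_congr_ae haeEq
        _ ≤ liminf (fun j => ∫⁻ t, ENNReal.ofReal (|(ι ((xs (ρ (σ j))).2)) t| ^ p) ∂μ) atTop :=
            lintegral_liminf_le' haemeas
    have hconv_int : ∀ gg : Lp ℝ 2 μ,
        ∫ t, |gg t| ^ p ∂μ = (∫⁻ t, ENNReal.ofReal (|gg t| ^ p) ∂μ).toReal := by
      intro gg
      rw [integral_eq_lintegral_of_nonneg_ae
        (Eventually.of_forall fun t => Real.rpow_nonneg (abs_nonneg _) _)
        (integrable_abs_rpow_of_memL2 hp0 hp1.le gg).1]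
    have hlint_ne : ∀ gg : Lp ℝ 2 μ, ∫⁻ t, ENNReal.ofReal (|gg t| ^ p) ∂μ ≠ ⊤ :=
      fun gg => (integrable_abs_rpow_of_memL2 hp0 hp1.le gg).lintegral_lt_top.ne
    have hGeq : ∀ j, ∫⁻ t, ENNReal.ofReal (|(ι ((xs (ρ (σ j))).2)) t| ^ p) ∂μ
        = ENNReal.ofReal (∫ t, |(ι ((xs (ρ (σ j))).2)) t| ^ p ∂μ) := by
      intro j
      rw [hconv_int, ENNReal.ofReal_toReal (hlint_ne _)]
    have hliminfJ : liminf (fun j => ∫⁻ t, ENNReal.ofReal (|(ι ((xs (ρ (σ j))).2)) t| ^ p) ∂μ)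
        atTop = ENNReal.ofReal jl := by
      simp only [hGeq]
      exact (((ENNReal.continuous_ofReal.tendsto _).comp hJσ)).liminf_eq
    rw [hliminfJ] at hFatou
    calc ∫ t, |(ι wbar) t| ^ p ∂μ
        = (∫⁻ t, ENNReal.ofReal (|(ι wbar) t| ^ p) ∂μ).toReal := hconv_int (ι wbar)
      _ ≤ (ENNReal.ofReal jl).toReal := ENNReal.toReal_mono ENNReal.ofReal_ne_top hFatou
      _ = jl := ENNReal.toReal_ofReal hjl0
  -- the limit value equals the infimum
  have hΦρ : ∀ k, Φ (xs (ρ k)) = f ((xs (ρ k)).1) + α / 2 * ‖(xs (ρ k)).1‖ ^ 2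
      + β / 2 * ‖(xs (ρ k)).2‖ ^ 2 + γ * ∫ t, |(ι ((xs (ρ k)).2)) t| ^ p ∂μ :=
    fun k => by rw [hΦdef]
  have hsum : Fl + α/2 * al^2 + β/2 * bl^2 + γ * jl = m := by
    have h1 : Tendsto (fun k => Φ (xs (ρ k))) atTop (nhds m) :=
      hΦtends.comp hρmono.tendsto_atTop
    have h2 : Tendsto (fun k => Φ (xs (ρ k))) atTop
        (nhds (Fl + α/2 * al^2 + β/2 * bl^2 + γ * jl)) := by
      simp only [hΦρ]
      exact ((hF.add (((hA.pow 2)).const_mul (α/2))).add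
        (((hB.pow 2)).const_mul (β/2))).add (hJt.const_mul γ)
    exact tendsto_nhds_unique h2 h1
  have hfinal : Φ (ubar, wbar) ≤ m := by
    have h1 : Φ (ubar, wbar) = f ubar + α / 2 * ‖ubar‖ ^ 2 + β / 2 * ‖wbar‖ ^ 2
        + γ * ∫ t, |(ι wbar) t| ^ p ∂μ := by rw [hΦdef]
    have t1 : α/2 * ‖ubar‖^2 ≤ α/2 * al^2 := by
      have h2 : ‖ubar‖^2 ≤ al^2 := by
        have := pow_le_pow_left₀ (norm_nonneg ubar) hal 2
        simpa using this
      have h3 : 0 ≤ α/2 := by positivity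
      exact mul_le_mul_of_nonneg_left h2 h3
    have t2 : β/2 * ‖wbar‖^2 ≤ β/2 * bl^2 := by
      have h2 : ‖wbar‖^2 ≤ bl^2 := by
        have := pow_le_pow_left₀ (norm_nonneg wbar) hbl 2
        simpa using this
      have h3 : 0 ≤ β/2 := by positivity
      exact mul_le_mul_of_nonneg_left h2 h3
    have t3 : γ * ∫ t, |(ι wbar) t| ^ p ∂μ ≤ γ * jl :=
      mul_le_mul_of_nonneg_left hjl hγ.le
    rw [h1, ← hsum]
    linarith
  -- conclusion
  refine ⟨ubar, wbar, hfeas, ?_⟩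
  intro u w hw
  have hwK : (u, w) ∈ Kset := by
    rw [hKdef]
    exact hw
  have h1 : Φ (ubar, wbar) ≤ Φ (u, w) := hfinal.trans (hmle (u, w) hwK)
  rw [hΦdef] at h1
  exact h1
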